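/- Let f, g ∈ Diff^1([0,1]) and let I ⊂ [0,1] be a compact interval with f(I) ∪ g(I) ⊂ I. Suppose (ω_i) is an infinite sequence with each ω_i ∈ {f,g} such that limsup (1/n) log ℓ(ω_{n−1}⋯ω_0(I)) < 0. Then for every x ∈ I, limsup (1/n) log |D(ω_{n−1}⋯ω_0)(x)| = limsup (1/n) log ℓ(ω_{n−1}⋯ω_0(I)). -/

import Mathlib

open Set Filter Topology

noncomputable section

/-- `f` is an orientation-preserving C¹ diffeomorphism of `[0,1]`, modeled as a
bijection of `ℝ` that equals the identity outside `[0,1]`. -/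
def DiffOnIcc (f : Equiv.Perm ℝ) : Prop :=
  (∀ x : ℝ, x ∉ Icc (0:ℝ) 1 → f x = x) ∧
  MapsTo ⇑f (Icc (0:ℝ) 1) (Icc (0:ℝ) 1) ∧
  StrictMonoOn ⇑f (Icc (0:ℝ) 1) ∧
  ContDiffOn ℝ 1 ⇑f (Icc (0:ℝ) 1) ∧
  ContDiffOn ℝ 1 ⇑f.symm (Icc (0:ℝ) 1) ∧
  ∀ x ∈ Icc (0:ℝ) 1, 0 < derivWithin ⇑f (Icc (0:ℝ) 1) x

/-- The derivative (within `[0,1]`) of a diffeomorphism of `[0,1]`. -/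
def D (f : Equiv.Perm ℝ) (x : ℝ) : ℝ := derivWithin ⇑f (Icc (0:ℝ) 1) x

/-- `f` is an orientation-preserving homeomorphism of `[0,1]`, modeled as a
bijection of `ℝ` that equals the identity outside `[0,1]`. -/
def HomeoOnIcc (f : Equiv.Perm ℝ) : Prop :=
  (∀ x : ℝ, x ∉ Icc (0:ℝ) 1 → f x = x) ∧
  MapsTo ⇑f (Icc (0:ℝ) 1) (Icc (0:ℝ) 1) ∧
  StrictMonoOn ⇑f (Icc (0:ℝ) 1) ∧
  ContinuousOn ⇑f (Icc (0:ℝ) 1)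

/-- `(a,b)` is a connected component of `[0,1] \ Fix f`: `a`, `b` are fixed and
there is no fixed point in between. -/
def IsCompFix (f : Equiv.Perm ℝ) (a b : ℝ) : Prop :=
  a ∈ Icc (0:ℝ) 1 ∧ b ∈ Icc (0:ℝ) 1 ∧ a < b ∧ f a = a ∧ f b = b ∧
  ∀ x ∈ Ioo a b, f x ≠ x

/-- `{a,b}` is a pair of successive fixed points of the group `G`. -/
def SuccFix (G : Subgroup (Equiv.Perm ℝ)) (a b : ℝ) : Prop :=
  ∃ g ∈ G, IsCompFix g a b

/-- The composition `ω (n-1) ∘ ⋯ ∘ ω 0`. -/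
def wordMap (ω : ℕ → Equiv.Perm ℝ) : ℕ → ℝ → ℝ
  | 0 => id
  | n + 1 => ⇑(ω n) ∘ wordMap ω n

lemma limsup_coe_le_of_eventually_le (a b : ℕ → ℝ)
    (h : ∀ ε : ℝ, 0 < ε → ∀ᶠ n in atTop, a n ≤ b n + ε) :
    limsup (fun n => (a n : EReal)) atTop ≤ limsup (fun n => (b n : EReal)) atTop := by
  apply le_of_forall_gt_imp_ge_of_dense
  intro c hc
  obtain ⟨r, hr1, hr2⟩ := EReal.exists_between_coe_real hc
  obtain ⟨r', hr1', hr2'⟩ := EReal.exists_between_coe_real hr2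
  have hrr' : r < r' := by exact_mod_cast hr1'
  have hev1 : ∀ᶠ n in atTop, (b n : EReal) < (r : EReal) :=
    eventually_lt_of_limsup_lt hr1
  have hev2 := h (r' - r) (by linarith)
  have hle : ∀ᶠ n in atTop, (a n : EReal) ≤ (r' : EReal) := by
    filter_upwards [hev1, hev2] with n h1 h2
    have hb : b n < r := by exact_mod_cast h1
    have : a n ≤ r' := by linarith
    exact_mod_cast this
  exact le_trans (limsup_le_of_le (h := hle)) hr2'.le

lemma limsup_coe_congr (a b : ℕ → ℝ)
    (h : Tendsto (fun n => a n - b n) atTop (𝓝 0)) :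
    limsup (fun n => (a n : EReal)) atTop = limsup (fun n => (b n : EReal)) atTop := by
  have key : ∀ ε : ℝ, 0 < ε → ∀ᶠ n in atTop, |a n - b n| ≤ ε := by
    intro ε hε
    filter_upwards [Metric.tendsto_nhds.1 h ε hε] with n hn
    simpa [Real.dist_eq] using hn.le
  apply le_antisymm
  · apply limsup_coe_le_of_eventually_le
    intro ε hε
    filter_upwards [key ε hε] with n hn
    have := abs_le.1 hn
    linarith [this.2]
  · apply limsup_coe_le_of_eventually_le
    intro ε hε
    filter_upwards [key ε hε] with n hn
    have := abs_le.1 hn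
    linarith [this.1]

/-- C¹ distortion control: if the lengths of the word-images of `I`
decrease exponentially, the derivative at any point of `I` has the same
exponential rate. -/
theorem stmt9 (f g : Equiv.Perm ℝ) (hf : DiffOnIcc f) (hg : DiffOnIcc g)
    (u v : ℝ) (huv : u < v) (hI : Icc u v ⊆ Icc (0:ℝ) 1)
    (hfI : ⇑f '' Icc u v ⊆ Icc u v) (hgI : ⇑g '' Icc u v ⊆ Icc u v)
    (ω : ℕ → Equiv.Perm ℝ) (hω : ∀ i, ω i = f ∨ ω i = g)
    (hlen : Filter.limsup (fun n : ℕ =>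
        ((Real.log (MeasureTheory.volume (wordMap ω n '' Icc u v)).toReal / n : ℝ) : EReal))
      Filter.atTop < 0) :
    ∀ x ∈ Icc u v,
      Filter.limsup (fun n : ℕ =>
          ((Real.log |derivWithin (wordMap ω n) (Icc (0:ℝ) 1) x| / n : ℝ) : EReal))
        Filter.atTop
      = Filter.limsup (fun n : ℕ =>
          ((Real.log (MeasureTheory.volume (wordMap ω n '' Icc u v)).toReal / n : ℝ) : EReal))
        Filter.atTop := by
  intro x hx
  have hUD : UniqueDiffOn ℝ (Icc (0:ℝ) 1) := uniqueDiffOn_Icc zero_lt_one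
  have hωprop : ∀ i, DiffOnIcc (ω i) := by
    intro i; rcases hω i with h | h <;> rw [h] <;> assumption
  have hωI : ∀ i, MapsTo ⇑(ω i) (Icc u v) (Icc u v) := by
    intro i; rcases hω i with h | h <;> rw [h] <;> exact Set.mapsTo_iff_image_subset.2 (by assumption)
  have huI : u ∈ Icc u v := left_mem_Icc.2 huv.le
  have hvI : v ∈ Icc u v := right_mem_Icc.2 huv.le
  -- basic induction facts about wordMap
  have hwA : ∀ n, MapsTo (wordMap ω n) (Icc (0:ℝ) 1) (Icc (0:ℝ) 1) := by
    intro n; induction n with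
    | zero => exact fun y hy => hy
    | succ n ih => exact ((hωprop n).2.1).comp ih
  have hwB : ∀ n, MapsTo (wordMap ω n) (Icc u v) (Icc u v) := by
    intro n; induction n with
    | zero => exact fun y hy => hy
    | succ n ih => exact (hωI n).comp ih
  have hwmono : ∀ n, StrictMonoOn (wordMap ω n) (Icc u v) := by
    intro n; induction n with
    | zero => exact fun p _ q _ h => h
    | succ n ih =>
      intro p hp q hq hpq
      exact (hωprop n).2.2.1 (hI (hwB n hp)) (hI (hwB n hq)) (ih hp hq hpq)
  have hwuv : ∀ n, wordMap ω n u < wordMap ω n v := fun n => hwmono n huI hvI huv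
  have hwuS : ∀ n, wordMap ω n u ∈ Icc (0:ℝ) 1 := fun n => hI (hwB n huI)
  have hwvS : ∀ n, wordMap ω n v ∈ Icc (0:ℝ) 1 := fun n => hI (hwB n hvI)
  -- image of Icc under a single map
  have himg : ∀ i, ∀ a b : ℝ, a ∈ Icc (0:ℝ) 1 → b ∈ Icc (0:ℝ) 1 → a ≤ b →
      ⇑(ω i) '' Icc a b = Icc (ω i a) (ω i b) := by
    intro i a b ha hb hab
    have hsub : Icc a b ⊆ Icc (0:ℝ) 1 := Icc_subset_Icc ha.1 hb.2
    have hcont : ContinuousOn ⇑(ω i) (Icc a b) :=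
      ((hωprop i).2.2.2.1.continuousOn).mono hsub
    apply Subset.antisymm
    · rintro _ ⟨z, hz, rfl⟩
      exact ⟨(hωprop i).2.2.1.monotoneOn (hsub (left_mem_Icc.2 hab)) (hsub hz) hz.1,
        (hωprop i).2.2.1.monotoneOn (hsub hz) (hsub (right_mem_Icc.2 hab)) hz.2⟩
    · exact intermediate_value_Icc hab hcont
  have hwimg : ∀ n, wordMap ω n '' Icc u v = Icc (wordMap ω n u) (wordMap ω n v) := by
    intro n; induction n with
    | zero => simp [wordMap]
    | succ n ih =>
      have : wordMap ω (n+1) '' Icc u v = ⇑(ω n) '' (wordMap ω n '' Icc u v) := by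
        rw [← Set.image_comp]; rfl
      rw [this, ih, himg n _ _ (hwuS n) (hwvS n) (hwuv n).le]; rfl
  -- the length function
  have hvol : ∀ n, (MeasureTheory.volume (wordMap ω n '' Icc u v)).toReal
      = wordMap ω n v - wordMap ω n u := by
    intro n
    rw [hwimg n, Real.volume_Icc, ENNReal.toReal_ofReal (sub_nonneg.2 (hwuv n).le)]
  -- derivative positivity and values
  have hDpos : ∀ i, ∀ y ∈ Icc (0:ℝ) 1, 0 < D (ω i) y := by
    intro i y hy; rcases hω i with h | h <;> rw [h]
    · exact hf.2.2.2.2.2 y hy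
    · exact hg.2.2.2.2.2 y hy
  have hderiv : ∀ n, ∀ y ∈ Icc (0:ℝ) 1,
      HasDerivWithinAt (wordMap ω n)
        (∏ i ∈ Finset.range n, D (ω i) (wordMap ω i y)) (Icc (0:ℝ) 1) y := by
    intro n; induction n with
    | zero =>
      intro y hy
      simpa [wordMap] using (hasDerivWithinAt_id y (Icc (0:ℝ) 1))
    | succ n ih =>
      intro y hy
      have h1 := ih y hy
      have hy' : wordMap ω n y ∈ Icc (0:ℝ) 1 := hwA n hy
      have h2 : HasDerivWithinAt ⇑(ω n) (D (ω n) (wordMap ω n y)) (Icc (0:ℝ) 1)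
          (wordMap ω n y) :=
        (((hωprop n).2.2.2.1.differentiableOn one_ne_zero) _ hy').hasDerivWithinAt
      have := h2.comp y h1 (hwA n)
      simpa [wordMap, Finset.prod_range_succ, mul_comm] using this
  have hxS : x ∈ Icc (0:ℝ) 1 := hI hx
  have hprodpos : ∀ n, 0 < ∏ i ∈ Finset.range n, D (ω i) (wordMap ω i x) :=
    fun n => Finset.prod_pos fun i _ => hDpos i _ (hwA i hxS)
  have hlogD : ∀ n, Real.log |derivWithin (wordMap ω n) (Icc (0:ℝ) 1) x|
      = ∑ i ∈ Finset.range n, Real.log (D (ω i) (wordMap ω i x)) := by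
    intro n
    rw [(hderiv n x hxS).derivWithin (hUD x hxS), abs_of_pos (hprodpos n),
      Real.log_prod (fun i _ => (hDpos i _ (hwA i hxS)).ne')]
  -- mean value theorem at each step
  have hMVT : ∀ n, ∃ ξ ∈ Icc (wordMap ω n u) (wordMap ω n v),
      wordMap ω (n+1) v - wordMap ω (n+1) u
        = D (ω n) ξ * (wordMap ω n v - wordMap ω n u) := by
    intro n
    have hab : wordMap ω n u < wordMap ω n v := hwuv n
    have hsub : Icc (wordMap ω n u) (wordMap ω n v) ⊆ Icc (0:ℝ) 1 :=
      Icc_subset_Icc (hwuS n).1 (hwvS n).2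
    have hcont : ContinuousOn ⇑(ω n) (Icc (wordMap ω n u) (wordMap ω n v)) :=
      ((hωprop n).2.2.2.1.continuousOn).mono hsub
    have hder : ∀ z ∈ Ioo (wordMap ω n u) (wordMap ω n v),
        HasDerivAt ⇑(ω n) (D (ω n) z) z := by
      intro z hz
      have hz0 : 0 < z := lt_of_le_of_lt (hwuS n).1 hz.1
      have hz1 : z < 1 := lt_of_lt_of_le hz.2 (hwvS n).2
      have hzS : z ∈ Icc (0:ℝ) 1 := ⟨hz0.le, hz1.le⟩
      exact ((((hωprop n).2.2.2.1.differentiableOn one_ne_zero) z hzS).hasDerivWithinAt).hasDerivAt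
        (Icc_mem_nhds hz0 hz1)
    obtain ⟨ξ, hξ, hξeq⟩ :=
      exists_hasDerivAt_eq_slope ⇑(ω n) (fun z => D (ω n) z) hab hcont hder
    refine ⟨ξ, Ioo_subset_Icc_self hξ, ?_⟩
    have he1 : wordMap ω (n+1) v = ω n (wordMap ω n v) := rfl
    have he2 : wordMap ω (n+1) u = ω n (wordMap ω n u) := rfl
    rw [he1, he2, hξeq, div_mul_cancel₀ _ (sub_ne_zero.2 hab.ne')]
  choose ξ hξmem hξeq using hMVT
  have hξS : ∀ n, ξ n ∈ Icc (0:ℝ) 1 := fun n =>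
    Icc_subset_Icc (hwuS n).1 (hwvS n).2 (hξmem n)
  -- telescoping the length
  have hLog : ∀ n, Real.log (wordMap ω n v - wordMap ω n u)
      = Real.log (v - u) + ∑ i ∈ Finset.range n, Real.log (D (ω i) (ξ i)) := by
    intro n; induction n with
    | zero => simp [wordMap]
    | succ n ih =>
      rw [hξeq n, Real.log_mul (hDpos n _ (hξS n)).ne' (sub_pos.2 (hwuv n)).ne', ih,
        Finset.sum_range_succ]
      ring
  -- lengths tend to 0
  have hfun : (fun n : ℕ =>
      ((Real.log (MeasureTheory.volume (wordMap ω n '' Icc u v)).toReal / n : ℝ) : EReal))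
      = fun n : ℕ => ((Real.log (wordMap ω n v - wordMap ω n u) / n : ℝ) : EReal) := by
    funext n; rw [hvol n]
  rw [hfun] at hlen ⊢
  have hℓ0 : Tendsto (fun n => wordMap ω n v - wordMap ω n u) atTop (𝓝 0) := by
    obtain ⟨c, hc1, hc2⟩ := EReal.exists_between_coe_real hlen
    have hcneg : c < 0 := by exact_mod_cast hc2
    have hev : ∀ᶠ n in atTop,
        ((Real.log (wordMap ω n v - wordMap ω n u) / n : ℝ) : EReal) < (c : EReal) :=
      eventually_lt_of_limsup_lt hc1
    have htends : Tendsto (fun n : ℕ => Real.log (wordMap ω n v - wordMap ω n u))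
        atTop atBot := by
      have hcn : Tendsto (fun n : ℕ => c * n) atTop atBot := by
        have h1 : Tendsto (fun n : ℕ => (-c) * n) atTop atTop :=
          (tendsto_natCast_atTop_atTop (R := ℝ)).const_mul_atTop (by linarith)
        have : (fun n : ℕ => c * n) = fun n : ℕ => -((-c) * n) := by funext n; ring
        rw [this]
        exact tendsto_neg_atTop_atBot.comp h1
      apply tendsto_atBot_mono' atTop _ hcn
      filter_upwards [hev, eventually_ge_atTop 1] with n hn hn1
      have hnr : (0:ℝ) < n := by exact_mod_cast hn1
      have : Real.log (wordMap ω n v - wordMap ω n u) / n < c := by exact_mod_cast hn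
      calc c * n ≥ (Real.log (wordMap ω n v - wordMap ω n u) / n) * n := by
            apply mul_le_mul_of_nonneg_right this.le hnr.le
        _ = Real.log (wordMap ω n v - wordMap ω n u) := by field_simp
    have : Tendsto (fun n : ℕ => Real.exp (Real.log (wordMap ω n v - wordMap ω n u)))
        atTop (𝓝 0) := Real.tendsto_exp_atBot.comp htends
    refine this.congr fun n => ?_
    exact Real.exp_log (sub_pos.2 (hwuv n))
  -- the error sequence tends to 0
  set e : ℕ → ℝ := fun i =>
    |Real.log (D (ω i) (wordMap ω i x)) - Real.log (D (ω i) (ξ i))| with he_def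
  have hUC : ∀ F : Equiv.Perm ℝ, DiffOnIcc F →
      UniformContinuousOn (fun y => Real.log (D F y)) (Icc (0:ℝ) 1) := by
    intro F hF
    apply isCompact_Icc.uniformContinuousOn_of_continuous
    exact (hF.2.2.2.1.continuousOn_derivWithin hUD le_rfl).log
      (fun y hy => (hF.2.2.2.2.2 y hy).ne')
  have he0 : Tendsto e atTop (𝓝 0) := by
    rw [Metric.tendsto_nhds]
    intro ε hε
    obtain ⟨δf, hδf, Hf⟩ := Metric.uniformContinuousOn_iff.1 (hUC f hf) ε hε
    obtain ⟨δg, hδg, Hg⟩ := Metric.uniformContinuousOn_iff.1 (hUC g hg) ε hε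
    have hδ : 0 < min δf δg := lt_min hδf hδg
    filter_upwards [Metric.tendsto_nhds.1 hℓ0 (min δf δg) hδ] with n hn
    have hlen_small : wordMap ω n v - wordMap ω n u < min δf δg := by
      have := hn
      rw [Real.dist_eq, sub_zero] at this
      exact lt_of_le_of_lt (le_abs_self _) this
    have hwx : wordMap ω n x ∈ Icc (wordMap ω n u) (wordMap ω n v) := by
      rw [← hwimg n]; exact mem_image_of_mem _ hx
    have hdxy : dist (wordMap ω n x) (ξ n) < min δf δg :=
      lt_of_le_of_lt (Real.dist_le_of_mem_Icc hwx (hξmem n)) hlen_small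
    have hwxS : wordMap ω n x ∈ Icc (0:ℝ) 1 := hwA n hxS
    rw [Real.dist_eq, sub_zero, abs_abs]
    rcases hω n with h | h <;> rw [h]
    · exact Hf _ hwxS _ (hξS n) (lt_of_lt_of_le hdxy (min_le_left _ _))
    · exact Hg _ hwxS _ (hξS n) (lt_of_lt_of_le hdxy (min_le_right _ _))
  -- Cesàro
  have hces : Tendsto (fun n : ℕ => (n:ℝ)⁻¹ • ∑ i ∈ Finset.range n, e i) atTop (𝓝 0) :=
    he0.cesaro
  -- the difference of the two rate sequences tends to 0
  have hdiff : Tendsto (fun n : ℕ =>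
      (∑ i ∈ Finset.range n, Real.log (D (ω i) (wordMap ω i x))) / n
        - Real.log (wordMap ω n v - wordMap ω n u) / n) atTop (𝓝 0) := by
    have hbound : ∀ᶠ n : ℕ in atTop,
        ‖(∑ i ∈ Finset.range n, Real.log (D (ω i) (wordMap ω i x))) / n
          - Real.log (wordMap ω n v - wordMap ω n u) / n‖
        ≤ |Real.log (v - u)| / n + (n:ℝ)⁻¹ • ∑ i ∈ Finset.range n, e i := by
      filter_upwards [eventually_ge_atTop 1] with n hn1
      have hnr : (0:ℝ) < n := by exact_mod_cast hn1
      have hkey : |(∑ i ∈ Finset.range n, Real.log (D (ω i) (wordMap ω i x)))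
          - Real.log (wordMap ω n v - wordMap ω n u)|
          ≤ |Real.log (v - u)| + ∑ i ∈ Finset.range n, e i := by
        rw [hLog n]
        have : (∑ i ∈ Finset.range n, Real.log (D (ω i) (wordMap ω i x)))
            - (Real.log (v - u) + ∑ i ∈ Finset.range n, Real.log (D (ω i) (ξ i)))
            = -Real.log (v - u) + ∑ i ∈ Finset.range n,
              (Real.log (D (ω i) (wordMap ω i x)) - Real.log (D (ω i) (ξ i))) := by
          rw [Finset.sum_sub_distrib]; ring
        rw [this]
        calc |(-Real.log (v - u)) + ∑ i ∈ Finset.range n,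
              (Real.log (D (ω i) (wordMap ω i x)) - Real.log (D (ω i) (ξ i)))|
            ≤ |(-Real.log (v - u))| + |∑ i ∈ Finset.range n,
              (Real.log (D (ω i) (wordMap ω i x)) - Real.log (D (ω i) (ξ i)))| :=
              abs_add_le _ _
          _ ≤ |Real.log (v - u)| + ∑ i ∈ Finset.range n, e i := by
              rw [abs_neg]
              exact add_le_add le_rfl (Finset.abs_sum_le_sum_abs _ _)
      rw [Real.norm_eq_abs, div_sub_div_same, abs_div, abs_of_pos hnr, smul_eq_mul,
        inv_mul_eq_div, ← add_div]
      exact (div_le_div_iff_of_pos_right hnr).2 hkey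
    have hrhs : Tendsto (fun n : ℕ => |Real.log (v - u)| / n
        + (n:ℝ)⁻¹ • ∑ i ∈ Finset.range n, e i) atTop (𝓝 0) := by
      have := (tendsto_const_div_atTop_nhds_zero_nat |Real.log (v - u)|).add hces
      simpa using this
    exact squeeze_zero_norm' hbound hrhs
  have hlhs : (fun n : ℕ =>
      ((Real.log |derivWithin (wordMap ω n) (Icc (0:ℝ) 1) x| / n : ℝ) : EReal))
      = fun n : ℕ => (((∑ i ∈ Finset.range n, Real.log (D (ω i) (wordMap ω i x))) / n : ℝ)
        : EReal) := by
    funext n; rw [hlogD n]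
  rw [hlhs]
  exact limsup_coe_congr _ _ hdiff
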